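/- The key inequalities in the smoothing construction: let ω₀, ω₁ be positive semi-definite operators with Tr(ω₀) = Tr(ω₁), let λ ≥ 1, ε' = Tr((ω₀−ω₁)₊)/λ, and set ω̃₀ = (ω₀ + (1/λ)(ω₁−ω₀)₊)/(1+ε'), ω̃₁ = (ω₁ + (1/λ)(ω₀−ω₁)₊)/(1+ε'). Then (λ+1)·ω̃₀ ≥ ω̃₁ and (λ+1)·ω̃₁ ≥ ω̃₀ in the Loewner order. -/

import Mathlib

open Matrix
open scoped ComplexOrder

/-- The positive part `A₊` of a Hermitian matrix `A`, via its spectral decomposition. -/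
noncomputable def posPart {d : ℕ} {A : Matrix (Fin d) (Fin d) ℂ} (hA : A.IsHermitian) :
    Matrix (Fin d) (Fin d) ℂ :=
  (hA.eigenvectorUnitary : Matrix (Fin d) (Fin d) ℂ) *
    Matrix.diagonal (fun i => ((max (hA.eigenvalues i) 0 : ℝ) : ℂ)) *
    star (hA.eigenvectorUnitary : Matrix (Fin d) (Fin d) ℂ)

lemma posPart_eq_cfc {d : ℕ} {A : Matrix (Fin d) (Fin d) ℂ} (hA : A.IsHermitian) :
    _root_.posPart hA = cfc (fun x : ℝ => max x 0) A := by
  rw [Matrix.IsHermitian.cfc_eq]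
  rfl

lemma posPart_posSemidef {d : ℕ} {A : Matrix (Fin d) (Fin d) ℂ} (hA : A.IsHermitian) :
    (_root_.posPart hA).PosSemidef := by
  unfold _root_.posPart
  rw [Matrix.star_eq_conjTranspose]
  refine Matrix.PosSemidef.mul_mul_conjTranspose_same ?_ _
  refine Matrix.PosSemidef.diagonal ?_
  intro i
  simpa using Complex.zero_le_real.2 (le_max_right _ _)

lemma posPart_congr {d : ℕ} {A B : Matrix (Fin d) (Fin d) ℂ} (h : A = B)
    (hA : A.IsHermitian) (hB : B.IsHermitian) : _root_.posPart hA = _root_.posPart hB := by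
  subst h; rfl

lemma posPart_sub_posPart {d : ℕ} {A : Matrix (Fin d) (Fin d) ℂ} (hA : A.IsHermitian)
    (hA' : (-A).IsHermitian) : _root_.posPart hA - _root_.posPart hA' = A := by
  have hsa : IsSelfAdjoint A := hA
  have h2 : _root_.posPart hA' = cfc (fun x : ℝ => max (-x) 0) A :=
    (posPart_eq_cfc hA').trans
      (cfc_comp_neg (f := fun x : ℝ => max x 0) (a := A) (by fun_prop) hsa).symm
  rw [posPart_eq_cfc hA, h2, ← cfc_sub _ _ A (by fun_prop) (by fun_prop)]
  have : (fun x : ℝ => max x 0 - max (-x) 0) = fun x : ℝ => x := by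
    funext x
    rcases le_total 0 x with h | h
    · rw [max_eq_left h, max_eq_right (neg_nonpos.2 h), sub_zero]
    · rw [max_eq_right h, max_eq_left (neg_nonneg.2 h), zero_sub, neg_neg]
  rw [this, cfc_id' ℝ A]

lemma psd_add {d : ℕ} {A B : Matrix (Fin d) (Fin d) ℂ} (hA : A.PosSemidef)
    (hB : B.PosSemidef) : (A + B).PosSemidef := by
  refine Matrix.PosSemidef.of_dotProduct_mulVec_nonneg (hA.1.add hB.1) fun x => ?_
  rw [add_mulVec, dotProduct_add]
  exact add_nonneg (hA.dotProduct_mulVec_nonneg x) (hB.dotProduct_mulVec_nonneg x)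

lemma psd_smul {d : ℕ} {A : Matrix (Fin d) (Fin d) ℂ} (hA : A.PosSemidef)
    {c : ℝ} (hc : 0 ≤ c) : (c • A).PosSemidef := by
  refine Matrix.PosSemidef.of_dotProduct_mulVec_nonneg ?_ fun x => ?_
  · have := hA.1
    unfold Matrix.IsHermitian at this ⊢
    rw [Matrix.conjTranspose_smul_non_comm, this]
    · simp
    · intros; simp [Complex.ofReal_mul, mul_comm]
  · rw [Matrix.smul_mulVec, dotProduct_smul]
    have h := hA.dotProduct_mulVec_nonneg x
    rw [show c • (star x ⬝ᵥ A *ᵥ x) = (c : ℂ) * (star x ⬝ᵥ A *ᵥ x) from rfl]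
    exact mul_nonneg (by exact_mod_cast hc) h

lemma psd_trace_re_nonneg {d : ℕ} {A : Matrix (Fin d) (Fin d) ℂ} (hA : A.PosSemidef) :
    0 ≤ A.trace.re := by
  rw [Matrix.trace]
  simp only [Complex.re_sum]
  refine Finset.sum_nonneg fun i _ => ?_
  have h := hA.dotProduct_mulVec_nonneg (Pi.single i 1)
  have : star (Pi.single i 1) ⬝ᵥ A *ᵥ Pi.single i 1 = A i i := by
    simp [dotProduct, Matrix.mulVec, Pi.single_apply, apply_ite, mul_ite, ite_mul,
      Finset.sum_ite_eq, Finset.sum_ite_eq']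
  rw [this] at h
  exact (Complex.le_def.1 h).1

lemma key_smul_identity {M : Type*} [AddCommGroup M] [Module ℝ M] (a p q : M)
    (lam c : ℝ) (hlam : lam ≠ 0) :
    (lam + 1) • (c • (a + lam⁻¹ • p)) - c • ((a - q + p) + lam⁻¹ • q)
      = c • (lam • a + lam⁻¹ • p + (1 - lam⁻¹) • q) := by
  match_scalars <;> field_simp <;> ring

/-- Key inequalities in the smoothing construction: with `λ ≥ 1`,
`ε' = Tr((ω₀−ω₁)₊)/λ`, `ω̃₀ = (ω₀ + (1/λ)(ω₁−ω₀)₊)/(1+ε')` and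
`ω̃₁ = (ω₁ + (1/λ)(ω₀−ω₁)₊)/(1+ε')`, one has `(λ+1)ω̃₀ ≥ ω̃₁` and `(λ+1)ω̃₁ ≥ ω̃₀`
in the Loewner order. -/
theorem smoothing_key_inequalities {d : ℕ} (ω₀ ω₁ : Matrix (Fin d) (Fin d) ℂ)
    (h₀ : ω₀.PosSemidef) (h₁ : ω₁.PosSemidef) (htr : ω₀.trace = ω₁.trace)
    (lam : ℝ) (hlam : 1 ≤ lam) :
    ((lam + 1) •
        ((1 + ((posPart (h₀.isHermitian.sub h₁.isHermitian)).trace.re / lam))⁻¹ •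
          (ω₀ + lam⁻¹ • posPart (h₁.isHermitian.sub h₀.isHermitian))) -
      (1 + ((posPart (h₀.isHermitian.sub h₁.isHermitian)).trace.re / lam))⁻¹ •
        (ω₁ + lam⁻¹ • posPart (h₀.isHermitian.sub h₁.isHermitian))).PosSemidef ∧
    ((lam + 1) •
        ((1 + ((posPart (h₀.isHermitian.sub h₁.isHermitian)).trace.re / lam))⁻¹ •
          (ω₁ + lam⁻¹ • posPart (h₀.isHermitian.sub h₁.isHermitian))) -
      (1 + ((posPart (h₀.isHermitian.sub h₁.isHermitian)).trace.re / lam))⁻¹ •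
        (ω₀ + lam⁻¹ • posPart (h₁.isHermitian.sub h₀.isHermitian))).PosSemidef := by
  have hlam0 : (0 : ℝ) < lam := lt_of_lt_of_le one_pos hlam
  set P01 := _root_.posPart (h₀.isHermitian.sub h₁.isHermitian) with hP01def
  set P10 := _root_.posPart (h₁.isHermitian.sub h₀.isHermitian) with hP10def
  set c := (1 + (P01.trace.re / lam))⁻¹ with hcdef
  have hP01 : P01.PosSemidef := posPart_posSemidef _
  have hP10 : P10.PosSemidef := posPart_posSemidef _
  have hc : 0 ≤ c := by
    rw [hcdef]
    have := psd_trace_re_nonneg hP01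
    positivity
  have hB : (-(ω₀ - ω₁)).IsHermitian := by
    rw [neg_sub]; exact h₁.isHermitian.sub h₀.isHermitian
  have hP10eq : P10 = _root_.posPart hB :=
    posPart_congr (neg_sub ω₀ ω₁).symm _ _
  have hdec : P01 - P10 = ω₀ - ω₁ := by
    rw [hP10eq]
    exact posPart_sub_posPart (h₀.isHermitian.sub h₁.isHermitian) hB
  have hω₁ : ω₁ = ω₀ - P01 + P10 := by
    rw [show ω₀ - P01 + P10 = ω₀ - (P01 - P10) by abel, hdec]; abel
  have hω₀ : ω₀ = ω₁ - P10 + P01 := by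
    rw [show ω₁ - P10 + P01 = ω₁ + (P01 - P10) by abel, hdec]; abel
  have hinv : (0:ℝ) ≤ 1 - lam⁻¹ := by
    rw [sub_nonneg]
    exact inv_le_one_of_one_le₀ hlam
  constructor
  · rw [show ω₁ + lam⁻¹ • P01 = (ω₀ - P01 + P10) + lam⁻¹ • P01 by rw [← hω₁],
      key_smul_identity ω₀ P10 P01 lam c hlam0.ne']
    exact psd_smul (psd_add (psd_add (psd_smul h₀ hlam0.le)
      (psd_smul hP10 (inv_nonneg.2 hlam0.le))) (psd_smul hP01 hinv)) hc
  · rw [show ω₀ + lam⁻¹ • P10 = (ω₁ - P10 + P01) + lam⁻¹ • P10 by rw [← hω₀],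
      key_smul_identity ω₁ P01 P10 lam c hlam0.ne']
    exact psd_smul (psd_add (psd_add (psd_smul h₁ hlam0.le)
      (psd_smul hP01 (inv_nonneg.2 hlam0.le))) (psd_smul hP10 hinv)) hc
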